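/- Let S be a countable set, s_b ∈ S, and d : S → ℕ a function with d(s) = 0 if and only if s = s_b. Let (X_n)_{n≥0} be a time-homogeneous Markov chain on S with transition kernel P̃ such that for every s ≠ s_b, the measure P̃(s, ·) is supported on {s' ∈ S : |d(s') - d(s)| = 1} and assigns probability at least 1-β to the set {s' ∈ S : d(s') = d(s) - 1}, where 0 ≤ β < 1/2. If X_0 = s_0 almost surely, then the hitting time T = inf{n ≥ 0 : X_n = s_b} is almost surely finite and E[T] ≤ d(s_0)/(1-2β). In particular, if d(s) ≤ d_max for all s ∈ S, then E[T] ≤ d_max/(1-2β). -/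

import Mathlib

open MeasureTheory ProbabilityTheory ENNReal

lemma aux_arith' (k : ℕ) (p q m c : ℝ≥0∞) (hpq : p + q = 1) (hqc : q + c ≤ p) :
    (k:ℝ≥0∞)*(p*m) + ((k:ℝ≥0∞)+2)*(q*m) + c*m ≤ ((k:ℝ≥0∞)+1)*m := by
  have h1 : (k:ℝ≥0∞)*(p*m) + ((k:ℝ≥0∞)+2)*(q*m) + c*m
      = (k:ℝ≥0∞)*(p+q)*m + q*m + (q+c)*m := by ring
  rw [h1, hpq]
  calc (k:ℝ≥0∞)*1*m + q*m + (q+c)*m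
      ≤ (k:ℝ≥0∞)*1*m + q*m + p*m := by gcongr
    _ = (k:ℝ≥0∞)*m + (q+p)*m := by ring
    _ = ((k:ℝ≥0∞)+1)*m := by rw [add_comm q p, hpq]; ring

lemma aux_qc (β : ℝ) (hβ0 : 0 ≤ β) (hβ : β < 1/2) (p q : ℝ≥0∞) (hpq : p + q = 1)
    (hp : ENNReal.ofReal (1-β) ≤ p) : q + ENNReal.ofReal (1 - 2*β) ≤ p := by
  have h1 : ENNReal.ofReal (1-β) + ENNReal.ofReal β = 1 := by
    rw [← ENNReal.ofReal_add (by linarith) hβ0]; norm_num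
  have hq : q ≤ ENNReal.ofReal β := by
    have h2 : ENNReal.ofReal (1-β) + q ≤ ENNReal.ofReal (1-β) + ENNReal.ofReal β := by
      rw [h1, ← hpq]; exact add_le_add_left hp q
    exact (ENNReal.add_le_add_iff_left ENNReal.ofReal_ne_top).1 h2
  calc q + ENNReal.ofReal (1 - 2*β) ≤ ENNReal.ofReal β + ENNReal.ofReal (1 - 2*β) := by gcongr
    _ = ENNReal.ofReal (1 - β) := by
        rw [← ENNReal.ofReal_add hβ0 (by linarith)]; ring_nf
    _ ≤ p := hp

lemma aux_markov_set
    {Ω : Type*} {m0 : MeasurableSpace Ω} (μ : Measure Ω) [IsProbabilityMeasure μ]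
    {S : Type*} [Countable S] [MeasurableSpace S] [MeasurableSingletonClass S]
    (P : S → Measure S) (hP : ∀ s, IsProbabilityMeasure (P s))
    (X : ℕ → Ω → S) (hXmeas : ∀ n, Measurable (X n))
    (hMarkov : ∀ (n : ℕ) (A : Set S), MeasurableSet A →
      (μ[Set.indicator (X (n + 1) ⁻¹' A) (fun _ => (1 : ℝ)) |
          ⨆ i ∈ Finset.range (n + 1), MeasurableSpace.comap (X i) inferInstance])
        =ᵐ[μ] fun ω => (P (X n ω) A).toReal)
    (n : ℕ) (A : Set S) (hA : MeasurableSet A) (B : Set Ω)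
    (hB : MeasurableSet[⨆ i ∈ Finset.range (n + 1), MeasurableSpace.comap (X i) inferInstance] B) :
    μ (B ∩ X (n+1) ⁻¹' A) = ∫⁻ ω in B, P (X n ω) A ∂μ := by
  have hFle : (⨆ i ∈ Finset.range (n + 1), MeasurableSpace.comap (X i) inferInstance) ≤ m0 :=
    iSup₂_le fun i _ => (hXmeas i).comap_le
  have hB0 : MeasurableSet B := hFle _ hB
  have hCmeas : MeasurableSet (X (n+1) ⁻¹' A) := hXmeas (n+1) hA
  have hint : Integrable (Set.indicator (X (n + 1) ⁻¹' A) (fun _ => (1 : ℝ))) μ :=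
    (integrable_const (1:ℝ)).indicator hCmeas
  have hPmeas : Measurable (fun ω => P (X n ω) A) :=
    (measurable_of_countable (fun s => P s A)).comp (hXmeas n)
  have key : ∫ x in B, Set.indicator (X (n + 1) ⁻¹' A) (fun _ => (1 : ℝ)) x ∂μ
      = ∫ x in B, (P (X n x) A).toReal ∂μ := by
    rw [← setIntegral_condExp hFle hint hB]
    exact integral_congr_ae (ae_restrict_of_ae (hMarkov n A hA))
  have lhs : ∫ x in B, Set.indicator (X (n + 1) ⁻¹' A) (fun _ => (1 : ℝ)) x ∂μ
      = (μ (B ∩ X (n+1) ⁻¹' A)).toReal := by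
    rw [setIntegral_indicator hCmeas, setIntegral_const]
    simp; rfl
  have rhs : ∫ x in B, (P (X n x) A).toReal ∂μ = (∫⁻ ω in B, P (X n ω) A ∂μ).toReal := by
    refine integral_toReal (hPmeas.aemeasurable.restrict) ?_
    exact Filter.Eventually.of_forall (fun ω => lt_of_le_of_lt prob_le_one (by norm_num))
  have fin1 : μ (B ∩ X (n+1) ⁻¹' A) ≠ ⊤ := measure_ne_top _ _
  have fin2 : ∫⁻ ω in B, P (X n ω) A ∂μ ≠ ⊤ := by
    refine ne_top_of_le_ne_top (measure_ne_top μ B) ?_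
    calc ∫⁻ ω in B, P (X n ω) A ∂μ ≤ ∫⁻ _ in B, 1 ∂μ :=
          lintegral_mono fun ω => prob_le_one
      _ = μ B := by simp
  exact (ENNReal.toReal_eq_toReal_iff' fin1 fin2).1 (lhs.symm.trans (key.trans rhs))

lemma aux_step
    {Ω : Type*} {m0 : MeasurableSpace Ω} (μ : Measure Ω) [IsProbabilityMeasure μ]
    {S : Type*} [Countable S] [MeasurableSpace S] [MeasurableSingletonClass S]
    (sb : S) (d : S → ℕ) (hd : ∀ s, d s = 0 ↔ s = sb)
    (β : ℝ) (hβ0 : 0 ≤ β) (hβ : β < 1 / 2)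
    (P : S → Measure S) (hP : ∀ s, IsProbabilityMeasure (P s))
    (hsupp : ∀ s, s ≠ sb → P s {s' | d s' = d s + 1 ∨ d s' + 1 = d s} = 1)
    (hbias : ∀ s, s ≠ sb → ENNReal.ofReal (1 - β) ≤ P s {s' | d s' + 1 = d s})
    (X : ℕ → Ω → S) (hXmeas : ∀ n, Measurable (X n))
    (hMarkov : ∀ (n : ℕ) (A : Set S), MeasurableSet A →
      (μ[Set.indicator (X (n + 1) ⁻¹' A) (fun _ => (1 : ℝ)) |
          ⨆ i ∈ Finset.range (n + 1), MeasurableSpace.comap (X i) inferInstance])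
        =ᵐ[μ] fun ω => (P (X n ω) A).toReal)
    (n : ℕ) (s : S) (hs : s ≠ sb) (B : Set Ω)
    (hBF : MeasurableSet[⨆ i ∈ Finset.range (n + 1), MeasurableSpace.comap (X i) inferInstance] B)
    (hBX : ∀ ω ∈ B, X n ω = s) :
    ∫⁻ ω in B, (d (X (n+1) ω) : ℝ≥0∞) ∂μ + ENNReal.ofReal (1 - 2*β) * μ B
      ≤ (d s : ℝ≥0∞) * μ B := by
  have hFle : (⨆ i ∈ Finset.range (n + 1), MeasurableSpace.comap (X i) inferInstance) ≤ m0 :=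
    iSup₂_le fun i _ => (hXmeas i).comap_le
  have hB0 : MeasurableSet B := hFle _ hBF
  obtain ⟨k, hk⟩ : ∃ k, d s = k + 1 := by
    rcases Nat.exists_eq_succ_of_ne_zero (fun h0 => hs ((hd s).1 h0)) with ⟨k, hk⟩
    exact ⟨k, hk⟩
  set Adn : Set S := {s' | d s' + 1 = d s} with hAdn_def
  set Aup : Set S := {s' | d s' = d s + 1} with hAup_def
  have hAdn : MeasurableSet Adn := (Set.to_countable _).measurableSet
  have hAup : MeasurableSet Aup := (Set.to_countable _).measurableSet
  have hdisj : Disjoint Aup Adn := by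
    rw [Set.disjoint_left]; intro a ha1 ha2; simp only [hAup_def, hAdn_def, Set.mem_setOf_eq] at ha1 ha2; omega
  have hunion : {s' | d s' = d s + 1 ∨ d s' + 1 = d s} = Aup ∪ Adn := rfl
  have hPu1 : P s (Aup ∪ Adn) = 1 := by rw [← hunion]; exact hsupp s hs
  have hpq : P s Aup + P s Adn = 1 := by
    rw [← measure_union hdisj hAdn]; exact hPu1
  -- measures of the three pieces
  have μdn : μ (B ∩ X (n+1) ⁻¹' Adn) = P s Adn * μ B := by
    rw [aux_markov_set μ P hP X hXmeas hMarkov n Adn hAdn B hBF]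
    rw [setLIntegral_congr_fun hB0 (fun ω hω => by rw [hBX ω hω])]
    simp [mul_comm]
  have μup : μ (B ∩ X (n+1) ⁻¹' Aup) = P s Aup * μ B := by
    rw [aux_markov_set μ P hP X hXmeas hMarkov n Aup hAup B hBF]
    rw [setLIntegral_congr_fun hB0 (fun ω hω => by rw [hBX ω hω])]
    simp [mul_comm]
  have μc : μ (B ∩ X (n+1) ⁻¹' (Aup ∪ Adn)ᶜ) = 0 := by
    rw [aux_markov_set μ P hP X hXmeas hMarkov n _ (hAup.union hAdn).compl B hBF]
    rw [setLIntegral_congr_fun hB0 (fun ω hω => by rw [hBX ω hω])]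
    have hc0 : P s (Aup ∪ Adn)ᶜ = 0 := by
      rw [prob_compl_eq_one_sub (hAup.union hAdn), hPu1]; simp
    rw [setLIntegral_const, hc0, zero_mul]
  -- split the integral
  have hsplit : ∫⁻ ω in B, (d (X (n+1) ω) : ℝ≥0∞) ∂μ
      = ∫⁻ ω in B ∩ X (n+1) ⁻¹' Aup, (d (X (n+1) ω) : ℝ≥0∞) ∂μ
        + ∫⁻ ω in B ∩ X (n+1) ⁻¹' Adn, (d (X (n+1) ω) : ℝ≥0∞) ∂μ := by
    have h1 := lintegral_inter_add_diff (μ := μ) (fun ω => (d (X (n+1) ω) : ℝ≥0∞)) B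
      (hXmeas (n+1) (hAup.union hAdn))
    rw [Set.diff_eq, ← Set.preimage_compl] at h1
    rw [← h1, setLIntegral_measure_zero _ _ μc, add_zero, Set.preimage_union,
      Set.inter_union_distrib_left,
      lintegral_union (hB0.inter (hXmeas (n+1) hAdn))
        (Set.disjoint_of_subset Set.inter_subset_right Set.inter_subset_right
          (hdisj.preimage (X (n+1))))]
  have vup : ∫⁻ ω in B ∩ X (n+1) ⁻¹' Aup, (d (X (n+1) ω) : ℝ≥0∞) ∂μ
      = ((k:ℝ≥0∞)+2) * (P s Aup * μ B) := by
    rw [setLIntegral_congr_fun (hB0.inter (hXmeas (n+1) hAup))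
      (fun ω hω => ?_), setLIntegral_const, μup]
    have : d (X (n+1) ω) = k + 2 := by
      have := hω.2; simp only [Set.mem_preimage, hAup_def, Set.mem_setOf_eq] at this; omega
    rw [this]; push_cast; ring
  have vdn : ∫⁻ ω in B ∩ X (n+1) ⁻¹' Adn, (d (X (n+1) ω) : ℝ≥0∞) ∂μ
      = (k:ℝ≥0∞) * (P s Adn * μ B) := by
    rw [setLIntegral_congr_fun (hB0.inter (hXmeas (n+1) hAdn))
      (fun ω hω => ?_), setLIntegral_const, μdn]
    have : d (X (n+1) ω) = k := by
      have := hω.2; simp only [Set.mem_preimage, hAdn_def, Set.mem_setOf_eq] at this; omega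
    rw [this]
  rw [hsplit, vup, vdn, hk]
  have hqc : P s Aup + ENNReal.ofReal (1 - 2*β) ≤ P s Adn :=
    aux_qc β hβ0 hβ _ _ ((add_comm (P s Adn) (P s Aup)).trans hpq) (hbias s hs)
  have := aux_arith' k (P s Adn) (P s Aup) (μ B) (ENNReal.ofReal (1 - 2*β))
    ((add_comm (P s Adn) (P s Aup)).trans hpq) hqc
  push_cast
  calc ((k:ℝ≥0∞)+2) * (P s Aup * μ B) + (k:ℝ≥0∞) * (P s Adn * μ B) + ENNReal.ofReal (1 - 2*β) * μ B
      = (k:ℝ≥0∞) * (P s Adn * μ B) + ((k:ℝ≥0∞)+2) * (P s Aup * μ B) + ENNReal.ofReal (1 - 2*β) * μ B := by ring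
    _ ≤ ((k:ℝ≥0∞)+1) * μ B := this

lemma aux_tail (m : ℕ∞) : (m : ℝ≥0∞) = ∑' n : ℕ, if (n : ℕ∞) < m then 1 else 0 := by
  cases m with
  | top =>
    have h : ∀ n : ℕ, (if (n : ℕ∞) < (⊤:ℕ∞) then (1:ℝ≥0∞) else 0) = 1 := by intro n; simp
    rw [tsum_congr h]
    simp [ENNReal.tsum_const_eq_top_of_ne_zero]
  | coe k =>
    rw [tsum_eq_sum (s := Finset.range k) (by intro b hb; simp at hb ⊢; exact_mod_cast hb)]
    have h : ∀ n ∈ Finset.range k, (if (n : ℕ∞) < (k:ℕ∞) then (1:ℝ≥0∞) else 0) = 1 := by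
      intro n hn; simp at hn; simp [Nat.cast_lt.2 hn]
    rw [Finset.sum_congr rfl h]
    simp

theorem biased_pathway_hitting_time_bound
    {Ω : Type*} {m0 : MeasurableSpace Ω} (μ : Measure Ω) [IsProbabilityMeasure μ]
    {S : Type*} [Countable S] [MeasurableSpace S] [MeasurableSingletonClass S]
    (sb : S) (d : S → ℕ) (hd : ∀ s, d s = 0 ↔ s = sb)
    (β : ℝ) (hβ0 : 0 ≤ β) (hβ : β < 1 / 2)
    (P : S → Measure S) (hP : ∀ s, IsProbabilityMeasure (P s))
    (hsupp : ∀ s, s ≠ sb → P s {s' | d s' = d s + 1 ∨ d s' + 1 = d s} = 1)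
    (hbias : ∀ s, s ≠ sb → ENNReal.ofReal (1 - β) ≤ P s {s' | d s' + 1 = d s})
    (X : ℕ → Ω → S) (hXmeas : ∀ n, Measurable (X n))
    (hMarkov : ∀ (n : ℕ) (A : Set S), MeasurableSet A →
      (μ[Set.indicator (X (n + 1) ⁻¹' A) (fun _ => (1 : ℝ)) |
          ⨆ i ∈ Finset.range (n + 1), MeasurableSpace.comap (X i) inferInstance])
        =ᵐ[μ] fun ω => (P (X n ω) A).toReal)
    (s0 : S) (hX0 : ∀ᵐ ω ∂μ, X 0 ω = s0)
    (T : Ω → ℕ∞)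
    (hT : ∀ ω, T ω = ⨅ (n : ℕ) (_ : X n ω = sb), (n : ℕ∞)) :
    (∀ᵐ ω ∂μ, T ω < ⊤) ∧
      ∫⁻ ω, (T ω : ℝ≥0∞) ∂μ ≤ ENNReal.ofReal (d s0 / (1 - 2 * β)) ∧
      ∀ dmax : ℕ, (∀ s, d s ≤ dmax) →
        ∫⁻ ω, (T ω : ℝ≥0∞) ∂μ ≤ ENNReal.ofReal (dmax / (1 - 2 * β)) := by
  have h2β : (0:ℝ) < 1 - 2*β := by linarith
  set c := ENNReal.ofReal (1 - 2*β) with hc_def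
  have hc0 : c ≠ 0 := by simp [hc_def, ENNReal.ofReal_eq_zero]; linarith
  have hcT : c ≠ ⊤ := ENNReal.ofReal_ne_top
  -- the events G n = {T > n}
  set G : ℕ → Set Ω := fun n => {ω | ∀ k ≤ n, X k ω ≠ sb} with hG_def
  have hGiInter : ∀ n, G n = ⋂ k ∈ Finset.range (n+1), X k ⁻¹' {sb}ᶜ := by
    intro n; ext ω
    simp [hG_def, Nat.lt_succ_iff]
  have hpreF : ∀ n, ∀ k ∈ Finset.range (n+1), ∀ C : Set S,
      MeasurableSet[⨆ i ∈ Finset.range (n + 1), MeasurableSpace.comap (X i) inferInstance]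
        (X k ⁻¹' C) := by
    intro n k hk C
    have h1 : MeasurableSet[MeasurableSpace.comap (X k) inferInstance] (X k ⁻¹' C) :=
      ⟨C, (Set.to_countable C).measurableSet, rfl⟩
    exact (le_iSup₂ (f := fun i (_ : i ∈ Finset.range (n+1)) =>
      MeasurableSpace.comap (X i) inferInstance) k hk) _ h1
  have hFle : ∀ n, (⨆ i ∈ Finset.range (n + 1), MeasurableSpace.comap (X i) inferInstance) ≤ m0 :=
    fun n => iSup₂_le fun i _ => (hXmeas i).comap_le
  have hGF : ∀ n, MeasurableSet[⨆ i ∈ Finset.range (n + 1),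
      MeasurableSpace.comap (X i) inferInstance] (G n) := by
    intro n
    rw [hGiInter n]
    exact MeasurableSet.biInter (Finset.range (n+1)).countable_toSet
      (fun k hk => hpreF n k hk _)
  have hGmeas : ∀ n, MeasurableSet (G n) := fun n => hFle n _ (hGF n)
  have hGanti : ∀ n, G (n+1) ⊆ G n := by
    intro n ω hω k hk; exact hω k (le_trans hk (Nat.le_succ n))
  -- aggregation step
  have hstep : ∀ n, ∫⁻ ω in G n, (d (X (n+1) ω) : ℝ≥0∞) ∂μ + c * μ (G n)
      ≤ ∫⁻ ω in G n, (d (X n ω) : ℝ≥0∞) ∂μ := by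
    intro n
    set B : {s : S // s ≠ sb} → Set Ω := fun s => G n ∩ X n ⁻¹' {s.val} with hB_def
    have hBF : ∀ s, MeasurableSet[⨆ i ∈ Finset.range (n + 1),
        MeasurableSpace.comap (X i) inferInstance] (B s) := by
      intro s
      exact (hGF n).inter (hpreF n n (by simp) _)
    have hBmeas : ∀ s, MeasurableSet (B s) := fun s => hFle n _ (hBF s)
    have hBX : ∀ s, ∀ ω ∈ B s, X n ω = s.val := fun s ω hω => hω.2
    have hGunion : G n = ⋃ s : {s : S // s ≠ sb}, B s := by
      ext ω; constructor
      · intro hω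
        have hne : X n ω ≠ sb := hω n le_rfl
        exact Set.mem_iUnion.2 ⟨⟨X n ω, hne⟩, hω, rfl⟩
      · rintro hω
        rcases Set.mem_iUnion.1 hω with ⟨s, hs⟩
        exact hs.1
    have hdisjB : Pairwise (Function.onFun Disjoint B) := by
      intro s t hst
      refine Set.disjoint_left.2 ?_
      rintro ω ⟨_, h1⟩ ⟨_, h2⟩
      simp only [Set.mem_preimage, Set.mem_singleton_iff] at h1 h2
      exact hst (Subtype.ext (h1 ▸ h2))
    have hint1 : ∫⁻ ω in G n, (d (X (n+1) ω) : ℝ≥0∞) ∂μ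
        = ∑' s : {s : S // s ≠ sb}, ∫⁻ ω in B s, (d (X (n+1) ω) : ℝ≥0∞) ∂μ := by
      rw [hGunion]; exact lintegral_iUnion hBmeas hdisjB _
    have hint2 : ∫⁻ ω in G n, (d (X n ω) : ℝ≥0∞) ∂μ
        = ∑' s : {s : S // s ≠ sb}, ∫⁻ ω in B s, (d (X n ω) : ℝ≥0∞) ∂μ := by
      rw [hGunion]; exact lintegral_iUnion hBmeas hdisjB _
    have hmeasG : μ (G n) = ∑' s : {s : S // s ≠ sb}, μ (B s) := by
      rw [hGunion]; exact measure_iUnion hdisjB hBmeas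
    rw [hint1, hint2, hmeasG, ENNReal.tsum_mul_left.symm, ← ENNReal.tsum_add]
    refine ENNReal.tsum_le_tsum (fun s => ?_)
    have h1 := aux_step μ sb d hd β hβ0 hβ P hP hsupp hbias X hXmeas hMarkov n s.val s.prop
      (B s) (hBF s) (hBX s)
    have h2 : ∫⁻ ω in B s, (d (X n ω) : ℝ≥0∞) ∂μ = (d s.val : ℝ≥0∞) * μ (B s) := by
      rw [setLIntegral_congr_fun (hBmeas s)
        (fun ω hω => by rw [hBX s ω hω]), setLIntegral_const]
    rw [h2]; exact h1
  -- telescoping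
  have hdec : ∀ n, ∫⁻ ω in G (n+1), (d (X (n+1) ω) : ℝ≥0∞) ∂μ
      ≤ ∫⁻ ω in G n, (d (X (n+1) ω) : ℝ≥0∞) ∂μ := fun n => lintegral_mono_set (hGanti n)
  have h0 : ∫⁻ ω in G 0, (d (X 0 ω) : ℝ≥0∞) ∂μ ≤ (d s0 : ℝ≥0∞) := by
    calc ∫⁻ ω in G 0, (d (X 0 ω) : ℝ≥0∞) ∂μ ≤ ∫⁻ ω, (d (X 0 ω) : ℝ≥0∞) ∂μ :=
          setLIntegral_le_lintegral _ _
      _ = ∫⁻ _, (d s0 : ℝ≥0∞) ∂μ := lintegral_congr_ae (hX0.mono fun ω h => by simp [h])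
      _ = (d s0 : ℝ≥0∞) := by simp
  have hchain : ∀ N, c * ∑ k ∈ Finset.range N, μ (G k)
      + ∫⁻ ω in G N, (d (X N ω) : ℝ≥0∞) ∂μ ≤ (d s0 : ℝ≥0∞) := by
    intro N
    induction N with
    | zero => simpa using h0
    | succ N ih =>
      calc c * ∑ k ∈ Finset.range (N+1), μ (G k)
          + ∫⁻ ω in G (N+1), (d (X (N+1) ω) : ℝ≥0∞) ∂μ
          ≤ c * ∑ k ∈ Finset.range (N+1), μ (G k)
            + ∫⁻ ω in G N, (d (X (N+1) ω) : ℝ≥0∞) ∂μ := by exact add_le_add le_rfl (hdec N)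
        _ = c * ∑ k ∈ Finset.range N, μ (G k)
            + (∫⁻ ω in G N, (d (X (N+1) ω) : ℝ≥0∞) ∂μ + c * μ (G N)) := by
            rw [Finset.sum_range_succ, mul_add]; ring
        _ ≤ c * ∑ k ∈ Finset.range N, μ (G k)
            + ∫⁻ ω in G N, (d (X N ω) : ℝ≥0∞) ∂μ := by gcongr; exact hstep N
        _ ≤ (d s0 : ℝ≥0∞) := ih
  have hsum : c * ∑' n, μ (G n) ≤ (d s0 : ℝ≥0∞) := by
    rw [ENNReal.tsum_eq_iSup_nat, ENNReal.mul_iSup]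
    exact iSup_le fun N => le_trans (le_add_right le_rfl) (hchain N)
  have htsum : ∑' n, μ (G n) ≤ ENNReal.ofReal ((d s0 : ℝ) / (1 - 2*β)) := by
    rw [ENNReal.ofReal_div_of_pos h2β, ENNReal.ofReal_natCast]
    exact (ENNReal.le_div_iff_mul_le (Or.inl hc0) (Or.inl hcT)).2
      (by rw [mul_comm]; exact hsum)
  -- T > n iff G n
  have hGT : ∀ (n : ℕ) (ω : Ω), ((n : ℕ) : ℕ∞) < T ω ↔ ω ∈ G n := by
    intro n ω
    constructor
    · intro h k hk hXk
      have hle : T ω ≤ (k : ℕ∞) := by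
        rw [hT ω]; exact iInf_le_of_le k (iInf_le_of_le hXk le_rfl)
      have : (n : ℕ∞) < (k : ℕ∞) := lt_of_lt_of_le h hle
      exact absurd (Nat.cast_lt.1 this) (by omega)
    · intro hω
      rw [hT ω]
      have : ((n+1 : ℕ) : ℕ∞) ≤ ⨅ (k : ℕ) (_ : X k ω = sb), (k : ℕ∞) := by
        refine le_iInf fun k => le_iInf fun hXk => ?_
        have hk : n + 1 ≤ k := by
          by_contra hlt
          exact hω k (by omega) hXk
        exact_mod_cast hk
      exact lt_of_lt_of_le (by exact_mod_cast Nat.lt_succ_self n) this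
  -- integral of T
  have hTint : ∫⁻ ω, (T ω : ℝ≥0∞) ∂μ = ∑' n, μ (G n) := by
    have hpt : ∀ ω, (T ω : ℝ≥0∞) = ∑' n : ℕ, Set.indicator (G n) (fun _ => (1:ℝ≥0∞)) ω := by
      intro ω
      rw [aux_tail (T ω)]
      refine tsum_congr fun n => ?_
      by_cases h : ω ∈ G n
      · rw [Set.indicator_of_mem h, if_pos ((hGT n ω).2 h)]
      · rw [Set.indicator_of_notMem h, if_neg (fun hlt => h ((hGT n ω).1 hlt))]
    calc ∫⁻ ω, (T ω : ℝ≥0∞) ∂μ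
        = ∫⁻ ω, ∑' n : ℕ, Set.indicator (G n) (fun _ => (1:ℝ≥0∞)) ω ∂μ :=
          lintegral_congr fun ω => hpt ω
      _ = ∑' n : ℕ, ∫⁻ ω, Set.indicator (G n) (fun _ => (1:ℝ≥0∞)) ω ∂μ :=
          lintegral_tsum fun n => ((measurable_one.indicator (hGmeas n)).aemeasurable)
      _ = ∑' n, μ (G n) := tsum_congr fun n => lintegral_indicator_one (hGmeas n)
  have hTle : ∫⁻ ω, (T ω : ℝ≥0∞) ∂μ ≤ ENNReal.ofReal ((d s0 : ℝ) / (1 - 2*β)) := by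
    rw [hTint]; exact htsum
  refine ⟨?_, hTle, ?_⟩
  · -- a.s. finiteness
    rw [ae_iff]
    have hsub : ∀ n, {ω | ¬ T ω < ⊤} ⊆ G n := by
      intro n ω hω
      have hTop : T ω = ⊤ := by
        simpa [lt_top_iff_ne_top, not_not] using hω
      exact (hGT n ω).1 (by rw [hTop]; exact WithTop.coe_lt_top _)
    by_contra hne
    have hε : ∀ n : ℕ, μ {ω | ¬ T ω < ⊤} ≤ μ (G n) := fun n => measure_mono (hsub n)
    have h1 : (∑' _ : ℕ, μ {ω | ¬ T ω < ⊤}) ≤ ∑' n, μ (G n) := ENNReal.tsum_le_tsum hε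
    rw [ENNReal.tsum_const_eq_top_of_ne_zero hne] at h1
    rw [top_le_iff.1 h1] at htsum
    exact ENNReal.ofReal_ne_top (top_le_iff.1 htsum)
  · intro dmax hdmax
    refine le_trans hTle (ENNReal.ofReal_le_ofReal ?_)
    have h1 : (d s0 : ℝ) ≤ (dmax : ℝ) := Nat.cast_le.2 (hdmax s0)
    gcongr
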